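/- Let p : {−1,0,1}×{−1,0,1} → ℝ satisfy p(i,j) ≥ 0 for all (i,j) and Σ_{i,j} p(i,j) = 1. Define the real polynomials b₂(y) = Σ_{j=−1}^{1} p(1,j)·y^{j+1}, b₁(y) = Σ_{j=−1}^{1} p(0,j)·y^{j+1} − y, b₀(y) = Σ_{j=−1}^{1} p(−1,j)·y^{j+1}, and the discriminant Δ(y) = b₁(y)² − 4·b₂(y)·b₀(y), a real polynomial of degree at most 4. If Δ is not the zero polynomial, then every complex root of Δ is real. -/

import Mathlib

/-!
For a random walk in the quarter plane with small steps and jump probabilities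
`p(i,j)`, `(i,j) ∈ {−1,0,1}²`, the kernel `P(x,y) = b₂(y)x² + b₁(y)x + b₀(y)`
has discriminant (in `x`) `Δ(y) = b₁(y)² − 4 b₂(y) b₀(y)`, a real polynomial of
degree at most 4. The paper asserts that all its roots are real: if `Δ ≠ 0`,
then every complex root of `Δ` is real.
-/

noncomputable section

open Polynomial

/-- `Σ_{j=−1}^{1} p(i,j)·y^{j+1}`, the generating polynomial of the row `i` of
the jump probabilities. -/
def bRow (p : ℤ × ℤ → ℝ) (i : ℤ) : Polynomial ℝ :=
  ∑ j ∈ Finset.range 3, Polynomial.C (p (i, (j : ℤ) - 1)) * Polynomial.X ^ j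

/-- `b₂(y) = Σ_{j=−1}^{1} p(1,j)·y^{j+1}`. -/
def b2 (p : ℤ × ℤ → ℝ) : Polynomial ℝ := bRow p 1

/-- `b₁(y) = Σ_{j=−1}^{1} p(0,j)·y^{j+1} − y`. -/
def b1 (p : ℤ × ℤ → ℝ) : Polynomial ℝ := bRow p 0 - Polynomial.X

/-- `b₀(y) = Σ_{j=−1}^{1} p(−1,j)·y^{j+1}`. -/
def b0 (p : ℤ × ℤ → ℝ) : Polynomial ℝ := bRow p (-1)

/-- The discriminant `Δ(y) = b₁(y)² − 4·b₂(y)·b₀(y)` of the kernel, a real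
polynomial of degree at most `4`. -/
def Δdisc (p : ℤ × ℤ → ℝ) : Polynomial ℝ :=
  (b1 p) ^ 2 - 4 * (b2 p) * (b0 p)

lemma ineq_at_one (A0 A1 A2 B0 B1 B2 C0 C1 C2 : ℝ)
    (hA0 : 0 ≤ A0) (hA1 : 0 ≤ A1) (hA2 : 0 ≤ A2)
    (hC0 : 0 ≤ C0) (hC1 : 0 ≤ C1) (hC2 : 0 ≤ C2)
    (hsum : A0+A1+A2+B0+B1+B2+C0+C1+C2 = 1) :
    0 ≤ (B0+(B1-1)*1+B2*1^2)^2 - 4*(A0+A1*1+A2*1^2)*(C0+C1*1+C2*1^2) := by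
  nlinarith [sq_nonneg (A0+A1+A2 - (C0+C1+C2))]

lemma ineq_at_neg_one (A0 A1 A2 B0 B1 B2 C0 C1 C2 : ℝ)
    (hA0 : 0 ≤ A0) (hA1 : 0 ≤ A1) (hA2 : 0 ≤ A2)
    (hB0 : 0 ≤ B0) (hB2 : 0 ≤ B2)
    (hC0 : 0 ≤ C0) (hC1 : 0 ≤ C1) (hC2 : 0 ≤ C2)
    (hsum : A0+A1+A2+B0+B1+B2+C0+C1+C2 = 1) :
    0 ≤ (B0+(B1-1)*(-1)+B2*(-1)^2)^2
      - 4*(A0+A1*(-1)+A2*(-1)^2)*(C0+C1*(-1)+C2*(-1)^2) := by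
  have hACnn : (0:ℝ) ≤ (A0+A1+A2) + (C0+C1+C2) := by positivity
  have key1 : (A0-A1+A2)*(C0-C1+C2) ≤ (A0+A1+A2)*(C0+C1+C2) := by
    nlinarith [mul_nonneg (show (0:ℝ) ≤ 2*A1 by linarith)
        (show (0:ℝ) ≤ 2*(C0+C2) by linarith),
      mul_nonneg (show (0:ℝ) ≤ 2*(A0+A2) by linarith)
        (show (0:ℝ) ≤ 2*C1 by linarith)]
  have key3 : (A0+A1+A2) + (C0+C1+C2) ≤ B0-B1+B2+1 := by linarith
  have h5 : 4*((A0+A1+A2)*(C0+C1+C2)) ≤ ((A0+A1+A2)+(C0+C1+C2))^2 := by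
    nlinarith [sq_nonneg ((A0+A1+A2)-(C0+C1+C2))]
  have h6 : ((A0+A1+A2)+(C0+C1+C2))^2 ≤ (B0-B1+B2+1)^2 :=
    pow_le_pow_left₀ hACnn key3 2
  nlinarith [key1, h5, h6]

lemma concave_contra (α β γ a : ℝ) (ha0 : 0 ≤ a) (ha1 : a < 1) (hα : α < 0)
    (hRm1 : 0 ≤ γ - β + α) (hR1 : 0 ≤ γ + β + α) (hRa : γ + β*a + α*a^2 ≤ 0) :
    False := by
  nlinarith [mul_nonneg (show (0:ℝ) ≤ 1 - a by linarith) hRm1,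
    mul_nonneg (show (0:ℝ) ≤ 1 + a by linarith) hR1,
    mul_pos (mul_pos (show (0:ℝ) < 1 - a by linarith) (show (0:ℝ) < 1 + a by linarith))
      (show (0:ℝ) < -α by linarith)]

lemma linear_zero (β γ a : ℝ) (ha0 : 0 ≤ a) (ha1 : a < 1)
    (hRm1 : 0 ≤ γ - β) (hR1 : 0 ≤ γ + β) (hRa : γ + β*a ≤ 0) :
    β = 0 ∧ γ = 0 := by
  have hx : (1+a)*(γ+β) ≤ 0 := by
    nlinarith [mul_nonneg (show (0:ℝ) ≤ 1-a by linarith) hRm1]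
  have hy : (1-a)*(γ-β) ≤ 0 := by
    nlinarith [mul_nonneg (show (0:ℝ) ≤ 1+a by linarith) hR1]
  have h1 : γ + β = 0 := by nlinarith
  have h2 : γ - β = 0 := by nlinarith
  constructor <;> linarith

lemma convex_contra (α β γ a b : ℝ) (ha0 : 0 ≤ a) (ha1 : a < 1) (hb : 1 < b)
    (hα : 0 < α) (hRa : γ + β*a + α*a^2 ≤ 0) (hRb : γ + β*b + α*b^2 ≤ 0)
    (hR1 : 0 ≤ γ + β + α) : False := by
  nlinarith [mul_nonneg (show (0:ℝ) ≤ b - 1 by linarith)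
      (show (0:ℝ) ≤ -(γ + β*a + α*a^2) by linarith),
    mul_nonneg (show (0:ℝ) ≤ 1 - a by linarith)
      (show (0:ℝ) ≤ -(γ + β*b + α*b^2) by linarith),
    mul_nonneg (show (0:ℝ) ≤ b - a by linarith) hR1,
    mul_pos (mul_pos (mul_pos hα (show (0:ℝ) < b-1 by linarith))
      (show (0:ℝ) < 1-a by linarith)) (show (0:ℝ) < b-a by linarith)]



lemma key (A0 A1 A2 B0 B1 B2 C0 C1 C2 : ℝ)
    (hA0 : 0 ≤ A0) (hA1 : 0 ≤ A1) (hA2 : 0 ≤ A2)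
    (hB0 : 0 ≤ B0) (hB1 : 0 ≤ B1) (hB2 : 0 ≤ B2)
    (hC0 : 0 ≤ C0) (hC1 : 0 ≤ C1) (hC2 : 0 ≤ C2)
    (hsum : A0+A1+A2+B0+B1+B2+C0+C1+C2 = 1)
    (Δp : Polynomial ℝ) (hΔ : Δp ≠ 0)
    (heval : ∀ t : ℝ, Δp.eval t =
      (B0+(B1-1)*t+B2*t^2)^2 - 4*(A0+A1*t+A2*t^2)*(C0+C1*t+C2*t^2))
    (hdeg : Δp.natDegree ≤ 4) (hc4 : Δp.coeff 4 = B2^2 - 4*A2*C2)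
    (z : ℂ) (hz : aeval z Δp = 0)
    (hzeval : aeval z Δp =
      ((B0:ℂ) + ((B1:ℝ)-1)*z + (B2:ℝ)*z^2)^2
        - 4*((A0:ℝ)+(A1:ℝ)*z+(A2:ℝ)*z^2)*((C0:ℝ)+(C1:ℝ)*z+(C2:ℝ)*z^2)) :
    z.im = 0 := by
  by_contra him
  have hACnn : (0:ℝ) ≤ A0+A1+A2+C0+C1+C2 := by positivity
  rcases eq_or_lt_of_le hACnn with hdegen | hspos
  · -- degenerate case: all A, C vanish, Δ = b₁²
    have hA0' : A0 = 0 := by linarith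
    have hA1' : A1 = 0 := by linarith
    have hA2' : A2 = 0 := by linarith
    have hC0' : C0 = 0 := by linarith
    have hC1' : C1 = 0 := by linarith
    have hC2' : C2 = 0 := by linarith
    have hq : ((B0:ℂ) + ((B1:ℝ)-1)*z + (B2:ℝ)*z^2) = 0 := by
      have h2 : ((B0:ℂ) + ((B1:ℝ)-1)*z + (B2:ℝ)*z^2)^2 = 0 := by
        rw [hzeval, hA0', hA1', hA2', hC0', hC1', hC2'] at hz
        push_cast at hz
        linear_combination hz
      exact (pow_eq_zero_iff two_ne_zero).mp h2
    have hBsum : B0 + B1 + B2 = 1 := by linarith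
    by_cases hB2' : B2 = 0
    · by_cases hB0' : B0 = 0
      · have hB1' : B1 = 1 := by linarith
        apply hΔ
        apply Polynomial.funext
        intro t
        rw [heval t, hA0', hA1', hA2', hC0', hC1', hC2', hB0', hB1', hB2']
        simp
      · have hB1c : (B1:ℂ) - 1 = -(B0:ℂ) := by
          have : B1 - 1 = -B0 := by linarith
          exact_mod_cast this
        have hB2c : (B2:ℂ) = 0 := by exact_mod_cast hB2'
        have hzz : (B0:ℂ) * (1 - z) = 0 := by
          linear_combination hq - z*hB1c - z^2*hB2c
        rcases mul_eq_zero.mp hzz with h | h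
        · exact hB0' (by exact_mod_cast h)
        · have : z = 1 := by linear_combination -h
          rw [this] at him; simp at him
    · -- B2 ≠ 0, quadratic formula
      have hB1' : (B1 - 1 : ℝ) = -(B0+B2) := by linarith
      have hB1c : (B1:ℂ) - 1 = -((B0:ℂ)+(B2:ℂ)) := by exact_mod_cast hB1'
      have hw2 : ((2*(B2:ℂ))*z + ((B1:ℂ)-1))^2 = ((B0:ℂ)-(B2:ℂ))^2 := by
        linear_combination (4*(B2:ℂ))*hq + (((B1:ℂ)-1) - ((B0:ℂ)+(B2:ℂ)))*hB1c
      have hfac : ((2*(B2:ℂ))*z + ((B1:ℂ)-1) - ((B0:ℂ)-(B2:ℂ))) *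
          ((2*(B2:ℂ))*z + ((B1:ℂ)-1) + ((B0:ℂ)-(B2:ℂ))) = 0 := by
        linear_combination hw2
      have himw : ((2*(B2:ℂ))*z + ((B1:ℂ)-1)).im = 2*B2*z.im := by
        simp [Complex.add_im, Complex.mul_im, Complex.mul_re, Complex.sub_im,
          Complex.ofReal_im, Complex.ofReal_re]
      have him2 : 2*B2*z.im = 0 := by
        rw [← himw]
        rcases mul_eq_zero.mp hfac with h | h
        · have hw : (2*(B2:ℂ))*z + ((B1:ℂ)-1) = ((B0:ℂ)-(B2:ℂ)) := by
            linear_combination h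
          rw [hw]; simp
        · have hw : (2*(B2:ℂ))*z + ((B1:ℂ)-1) = -((B0:ℂ)-(B2:ℂ)) := by
            linear_combination h
          rw [hw]; simp
      have : z.im = 0 := by
        rcases mul_eq_zero.mp him2 with h | h
        · exact absurd (by linarith : B2 = 0) hB2'
        · exact h
      exact him this
  · -- main case
    have hdvd := Polynomial.quadratic_dvd_of_aeval_eq_zero_im_ne_zero Δp hz him
    obtain ⟨r, hr⟩ := hdvd
    obtain ⟨q, hqdef⟩ : ∃ q' : Polynomial ℝ, q' = X^2 - C (2*z.re) * X + C (‖z‖^2) :=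
      ⟨_, rfl⟩
    rw [show X^2 - C (2*z.re) * X + C (‖z‖^2) = q from hqdef.symm] at hr
    have hnorm : ‖z‖^2 = z.re^2 + z.im^2 := by
      rw [Complex.sq_norm, Complex.normSq_apply]; ring
    have hqeval : ∀ t : ℝ, q.eval t = (t - z.re)^2 + z.im^2 := by
      intro t
      rw [hqdef]
      simp only [eval_add, eval_sub, eval_mul, eval_pow, eval_C, eval_X]
      rw [hnorm]
      ring
    have hqpos : ∀ t : ℝ, 0 < q.eval t := by
      intro t
      rw [hqeval]
      have h1 : z.im ≠ 0 := him
      positivity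
    have hqC : q = C 1 * X^2 + C (-(2*z.re)) * X + C (‖z‖^2) := by
      rw [hqdef]; simp [C_neg]; ring
    have hq2 : q.natDegree = 2 := by rw [hqC]; exact natDegree_quadratic one_ne_zero
    have hqne : q ≠ 0 := fun h => by simp [h] at hq2
    have hrne : r ≠ 0 := fun h => hΔ (by rw [hr, h, mul_zero])
    have hdegsum : Δp.natDegree = 2 + r.natDegree := by
      rw [hr, natDegree_mul hqne hrne, hq2]
    have hrdeg : r.natDegree ≤ 2 := by omega
    obtain ⟨α, β, γ, hαdef, hβdef, hγdef⟩ :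
        ∃ α β γ : ℝ, r.coeff 2 = α ∧ r.coeff 1 = β ∧ r.coeff 0 = γ := ⟨_, _, _, rfl, rfl, rfl⟩
    have hrval : ∀ t : ℝ, r.eval t = γ + β * t + α * t^2 := by
      intro t
      rw [eval_eq_sum_range' (lt_of_le_of_lt hrdeg (by norm_num : (2:ℕ) < 3))]
      rw [Finset.sum_range_succ, Finset.sum_range_succ, Finset.sum_range_succ,
        Finset.sum_range_zero, hαdef, hβdef, hγdef]
      ring
    have hαc4 : α = B2^2 - 4*A2*C2 := by
      rw [← hc4]
      rcases eq_or_lt_of_le hrdeg with h2 | h2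
      · have hqm : q.leadingCoeff = 1 := by
          rw [Polynomial.leadingCoeff, hq2, hqC, coeff_add, coeff_add, coeff_C_mul,
            coeff_C_mul, coeff_X_pow, coeff_X, coeff_C]
          norm_num
        have h4 : (4:ℕ) = q.natDegree + r.natDegree := by omega
        rw [hr, h4, coeff_mul_degree_add_degree, hqm, one_mul]
        rw [Polynomial.leadingCoeff, h2, hαdef]
      · have hα0 : α = 0 := hαdef ▸ coeff_eq_zero_of_natDegree_lt h2
        have hlt : Δp.natDegree < 4 := by omega
        rw [coeff_eq_zero_of_natDegree_lt hlt, hα0]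
    have hsign : ∀ t : ℝ, Δp.eval t = q.eval t * r.eval t := fun t => by rw [hr, eval_mul]
    -- value at 1 and -1
    have hΔ1 : 0 ≤ Δp.eval 1 := by
      rw [heval]
      exact ineq_at_one A0 A1 A2 B0 B1 B2 C0 C1 C2 hA0 hA1 hA2 hC0 hC1 hC2 hsum
    have hΔm1 : 0 ≤ Δp.eval (-1) := by
      rw [heval]
      exact ineq_at_neg_one A0 A1 A2 B0 B1 B2 C0 C1 C2 hA0 hA1 hA2 hB0 hB2 hC0 hC1 hC2 hsum
    have hR1 : 0 ≤ γ + β + α := by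
      have h : q.eval 1 * 0 ≤ q.eval 1 * (γ + β + α) := by
        have h2 := hsign 1
        rw [hrval 1] at h2
        rw [mul_zero]
        calc (0:ℝ) ≤ Δp.eval 1 := hΔ1
        _ = q.eval 1 * (γ + β * 1 + α * 1^2) := h2
        _ = q.eval 1 * (γ + β + α) := by ring
      exact le_of_mul_le_mul_left (by linarith [h] : q.eval 1 * 0 ≤ q.eval 1 * (γ+β+α)) (hqpos 1)
    have hRm1 : 0 ≤ γ - β + α := by
      have h : q.eval (-1) * 0 ≤ q.eval (-1) * (γ - β + α) := by
        rw [mul_zero]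
        calc (0:ℝ) ≤ Δp.eval (-1) := hΔm1
        _ = q.eval (-1) * (γ + β * (-1) + α * (-1)^2) := by rw [hsign (-1), hrval (-1)]
        _ = q.eval (-1) * (γ - β + α) := by ring
      exact le_of_mul_le_mul_left h (hqpos (-1))
    -- a root of the middle coefficient in [0,1)
    have hcont' : Continuous (fun t : ℝ => B0 + (B1-1)*t + B2*t^2) := by fun_prop
    have hcont : ∀ u v : ℝ, ContinuousOn (fun t : ℝ => B0 + (B1-1)*t + B2*t^2) (Set.Icc u v) :=
      fun u v => hcont'.continuousOn
    obtain ⟨a, ha01, hfa⟩ : ∃ a, a ∈ Set.Icc (0:ℝ) 1 ∧ (B0 + (B1-1)*a + B2*a^2) = 0 := by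
      have h0mem : (0:ℝ) ∈ Set.Icc (B0 + (B1-1)*1 + B2*1^2) (B0 + (B1-1)*0 + B2*0^2) := by
        constructor
        · linarith
        · linarith
      obtain ⟨a, ha, hfa⟩ := intermediate_value_Icc' (by norm_num : (0:ℝ) ≤ 1) (hcont 0 1) h0mem
      exact ⟨a, ha, hfa⟩
    have ha0 : 0 ≤ a := ha01.1
    have halt1 : a < 1 := by
      rcases lt_or_eq_of_le ha01.2 with h | h
      · exact h
      · exfalso
        rw [h] at hfa
        linarith
    have hquadA : ∀ t : ℝ, 0 ≤ t → 0 ≤ A0 + A1*t + A2*t^2 := by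
      intro t ht
      have := mul_nonneg hA1 ht
      have := mul_nonneg hA2 (sq_nonneg t)
      linarith
    have hquadC : ∀ t : ℝ, 0 ≤ t → 0 ≤ C0 + C1*t + C2*t^2 := by
      intro t ht
      have := mul_nonneg hC1 ht
      have := mul_nonneg hC2 (sq_nonneg t)
      linarith
    have hΔa : Δp.eval a ≤ 0 := by
      rw [heval, hfa]
      linarith [mul_nonneg (hquadA a ha0) (hquadC a ha0)]
    have hRa : γ + β*a + α*a^2 ≤ 0 := by
      have h : q.eval a * (γ + β*a + α*a^2) ≤ q.eval a * 0 := by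
        rw [mul_zero]
        calc q.eval a * (γ + β*a + α*a^2) = Δp.eval a := by rw [hsign a, hrval a]
        _ ≤ 0 := hΔa
      exact le_of_mul_le_mul_left h (hqpos a)
    rcases lt_trichotomy α 0 with hα | hα | hα
    · exact concave_contra α β γ a ha0 halt1 hα hRm1 hR1 hRa
    · -- linear case : r = 0, contradiction
      have hRa' : γ + β*a ≤ 0 := by
        have : α * a^2 = 0 := by rw [hα]; ring
        linarith [hRa]
      obtain ⟨hβ0, hγ0⟩ := linear_zero β γ a ha0 halt1
        (by linarith [hRm1] : 0 ≤ γ - β) (by linarith [hR1] : 0 ≤ γ + β) hRa'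
      apply hrne
      ext n
      simp only [coeff_zero]
      match n with
      | 0 => exact hγdef ▸ hγ0
      | 1 => exact hβdef ▸ hβ0
      | 2 => exact hαdef ▸ hα
      | (n+3) => exact coeff_eq_zero_of_natDegree_lt (by omega)
    · -- convex case : need a second root b > 1
      have hB2pos : 0 < B2 := by
        rcases lt_or_eq_of_le hB2 with h | h
        · exact h
        · exfalso
          rw [← h] at hαc4
          linarith [mul_nonneg hA2 hC2, hαc4, sq_nonneg (0:ℝ)]
      set T := (1 - B1)/B2 + 1 with hTdef
      have hB1le : B1 ≤ 1 := by linarith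
      have hT1 : 1 ≤ T := by
        have : 0 ≤ (1-B1)/B2 := div_nonneg (by linarith) hB2pos.le
        rw [hTdef]; linarith
      have hBT : B2 * T = (1 - B1) + B2 := by
        rw [hTdef]
        field_simp
      have hfT : 0 < B0 + (B1-1)*T + B2*T^2 := by
        have h2 : B2*T^2 = ((1-B1)+B2)*T := by
          rw [← hBT]; ring
        have h3 : B2*1 ≤ B2*T := mul_le_mul_of_nonneg_left hT1 hB2pos.le
        linarith [h2, h3]
      obtain ⟨b, hb01, hfb⟩ : ∃ b, b ∈ Set.Icc (1:ℝ) T ∧ (B0 + (B1-1)*b + B2*b^2) = 0 := by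
        have h0mem : (0:ℝ) ∈ Set.Icc (B0 + (B1-1)*1 + B2*1^2) (B0 + (B1-1)*T + B2*T^2) := by
          constructor
          · linarith
          · exact hfT.le
        obtain ⟨b, hb, hfb⟩ := intermediate_value_Icc hT1 (hcont 1 T) h0mem
        exact ⟨b, hb, hfb⟩
      have hb1 : 1 < b := by
        rcases lt_or_eq_of_le hb01.1 with h | h
        · exact h
        · exfalso
          rw [← h] at hfb
          linarith
      have hb0 : (0:ℝ) ≤ b := by linarith
      have hΔb : Δp.eval b ≤ 0 := by
        rw [heval, hfb]
        linarith [mul_nonneg (hquadA b hb0) (hquadC b hb0)]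
      have hRb : γ + β*b + α*b^2 ≤ 0 := by
        have h : q.eval b * (γ + β*b + α*b^2) ≤ q.eval b * 0 := by
          rw [mul_zero]
          calc q.eval b * (γ + β*b + α*b^2) = Δp.eval b := by rw [hsign b, hrval b]
          _ ≤ 0 := hΔb
        exact le_of_mul_le_mul_left h (hqpos b)
      exact convex_contra α β γ a b ha0 halt1 hb1 hα hRa hRb hR1



lemma bRow_eq (p : ℤ × ℤ → ℝ) (i : ℤ) :
    bRow p i = C (p (i,-1)) + C (p (i,0)) * X + C (p (i,1)) * X^2 := by
  rw [bRow]
  rw [Finset.sum_range_succ, Finset.sum_range_succ, Finset.sum_range_succ, Finset.sum_range_zero]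
  norm_num

lemma Δeval (p : ℤ × ℤ → ℝ) (t : ℝ) :
    (Δdisc p).eval t =
      (p (0,-1) + (p (0,0) - 1)*t + p (0,1)*t^2)^2
        - 4*(p (1,-1) + p (1,0)*t + p (1,1)*t^2)*(p (-1,-1) + p (-1,0)*t + p (-1,1)*t^2) := by
  simp only [Δdisc, b1, b2, b0, bRow_eq, eval_sub, eval_add, eval_mul, eval_pow, eval_C,
    eval_X, eval_ofNat]
  ring

lemma Δexpand (p : ℤ × ℤ → ℝ) :
    Δdisc p = C (p (0,-1)^2 - 4*(p (1,-1))*(p (-1,-1)))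
      + C (2*(p (0,-1))*(p (0,0)-1) - 4*(p (1,-1)*p (-1,0) + p (1,0)*p (-1,-1))) * X
      + C ((p (0,0)-1)^2 + 2*(p (0,-1))*(p (0,1)) - 4*(p (1,-1)*p (-1,1) + p (1,0)*p (-1,0) + p (1,1)*p (-1,-1))) * X^2
      + C (2*(p (0,0)-1)*(p (0,1)) - 4*(p (1,0)*p (-1,1) + p (1,1)*p (-1,0))) * X^3
      + C (p (0,1)^2 - 4*(p (1,1))*(p (-1,1))) * X^4 := by
  simp only [Δdisc, b1, b2, b0, bRow_eq, C_add, C_sub, C_mul, map_ofNat, map_one, C_1, C_pow]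
  ring

lemma Δdeg (p : ℤ × ℤ → ℝ) : (Δdisc p).natDegree ≤ 4 := by
  rw [Δexpand]
  compute_degree

lemma Δcoeff4 (p : ℤ × ℤ → ℝ) :
    (Δdisc p).coeff 4 = p (0,1)^2 - 4*(p (1,1))*(p (-1,1)) := by
  rw [Δexpand]
  simp only [coeff_add, coeff_C_mul, coeff_X_pow, coeff_X, coeff_C]
  norm_num

lemma Δaeval (p : ℤ × ℤ → ℝ) (z : ℂ) :
    aeval z (Δdisc p) =
      ((p (0,-1) : ℂ) + ((p (0,0) : ℝ) - 1)*z + (p (0,1) : ℝ)*z^2)^2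
        - 4*((p (1,-1) : ℝ) + (p (1,0) : ℝ)*z + (p (1,1) : ℝ)*z^2)
          *((p (-1,-1) : ℝ) + (p (-1,0) : ℝ)*z + (p (-1,1) : ℝ)*z^2) := by
  simp only [Δdisc, b1, b2, b0, bRow_eq, map_sub, map_add, map_mul, map_pow, map_ofNat,
    aeval_C, aeval_X, Complex.coe_algebraMap]
  ring

/-- If `p(i,j) ≥ 0` for all `(i,j) ∈ {−1,0,1}²` and `Σ_{i,j} p(i,j) = 1`, and
the discriminant `Δ = b₁² − 4 b₂ b₀` is not the zero polynomial, then every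
complex root of `Δ` is real. -/
theorem discriminant_roots_are_real (p : ℤ × ℤ → ℝ)
    (hp0 : ∀ m ∈ (Finset.Icc (-1 : ℤ) 1) ×ˢ (Finset.Icc (-1 : ℤ) 1), 0 ≤ p m)
    (hpsum : ∑ m ∈ (Finset.Icc (-1 : ℤ) 1) ×ˢ (Finset.Icc (-1 : ℤ) 1), p m = 1)
    (hΔ : Δdisc p ≠ 0) :
    ∀ z : ℂ, (Polynomial.aeval z) (Δdisc p) = 0 → z.im = 0 := by
  intro z hz
  have m11 : ((1:ℤ),(-1:ℤ)) ∈ (Finset.Icc (-1 : ℤ) 1) ×ˢ (Finset.Icc (-1 : ℤ) 1) := by decide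
  have m10 : ((1:ℤ),(0:ℤ)) ∈ (Finset.Icc (-1 : ℤ) 1) ×ˢ (Finset.Icc (-1 : ℤ) 1) := by decide
  have m12 : ((1:ℤ),(1:ℤ)) ∈ (Finset.Icc (-1 : ℤ) 1) ×ˢ (Finset.Icc (-1 : ℤ) 1) := by decide
  have m01 : ((0:ℤ),(-1:ℤ)) ∈ (Finset.Icc (-1 : ℤ) 1) ×ˢ (Finset.Icc (-1 : ℤ) 1) := by decide
  have m00 : ((0:ℤ),(0:ℤ)) ∈ (Finset.Icc (-1 : ℤ) 1) ×ˢ (Finset.Icc (-1 : ℤ) 1) := by decide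
  have m02 : ((0:ℤ),(1:ℤ)) ∈ (Finset.Icc (-1 : ℤ) 1) ×ˢ (Finset.Icc (-1 : ℤ) 1) := by decide
  have mm1 : ((-1:ℤ),(-1:ℤ)) ∈ (Finset.Icc (-1 : ℤ) 1) ×ˢ (Finset.Icc (-1 : ℤ) 1) := by decide
  have mm0 : ((-1:ℤ),(0:ℤ)) ∈ (Finset.Icc (-1 : ℤ) 1) ×ˢ (Finset.Icc (-1 : ℤ) 1) := by decide
  have mm2 : ((-1:ℤ),(1:ℤ)) ∈ (Finset.Icc (-1 : ℤ) 1) ×ˢ (Finset.Icc (-1 : ℤ) 1) := by decide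
  have hsum9 : p (-1,-1) + p (-1,0) + p (-1,1) + p (0,-1) + p (0,0) + p (0,1)
      + p (1,-1) + p (1,0) + p (1,1) = 1 := by
    rw [← hpsum, show (Finset.Icc (-1 : ℤ) 1) = {-1, 0, 1} from by decide]
    rw [Finset.sum_product]
    simp [Finset.sum_insert, Finset.mem_insert]
    ring
  exact key (p (1,-1)) (p (1,0)) (p (1,1)) (p (0,-1)) (p (0,0)) (p (0,1))
    (p (-1,-1)) (p (-1,0)) (p (-1,1))
    (hp0 _ m11) (hp0 _ m10) (hp0 _ m12) (hp0 _ m01) (hp0 _ m00) (hp0 _ m02)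
    (hp0 _ mm1) (hp0 _ mm0) (hp0 _ mm2)
    (by linarith [hsum9]) (Δdisc p) hΔ (Δeval p) (Δdeg p) (Δcoeff4 p) z hz (Δaeval p z)

end
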